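/- Let Ω be a finite set and A ⊆ Ωᵏ with |A| ≤ ε·|Ω|ᵏ for some ε ∈ [0,1]. For each j ∈ [m], let σ_{1j},…,σ_{kj} be independent uniformly random permutations of Ω (independent across j). Then for any fixed functions E_{ij} : 𝒲 → Ω and any fixed w ∈ 𝒲 with the property that for each j, the tuple (σ_{1j}(E_{1j}(w)),…,σ_{kj}(E_{kj}(w))) is uniformly distributed on Ωᵏ, the probability that more than 2εm indices j satisfy (σ_{1j}(E_{1j}(w)),…,σ_{kj}(E_{kj}(w))) ∈ A is at most 2^{−εm/2}. Consequently, by averaging over a finite message set 𝒲, there exists a fixed choice of permutations {σ_{ij}} such that for a uniformly random message w ∈ 𝒲, the probability that more than 2εm indices j land in A is at most 2^{−εm/2}. -/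

import Mathlib

open Finset

private lemma one_add_le_two_rpow (ε : ℝ) (hε0 : 0 ≤ ε) :
    1 + ε ≤ (2:ℝ) ^ (3 * ε / 2) := by
  rw [Real.rpow_def_of_pos (by norm_num : (0:ℝ) < 2)]
  have h1 := Real.add_one_le_exp (Real.log 2 * (3 * ε / 2))
  have hlog : (0.6931471803 : ℝ) < Real.log 2 := Real.log_two_gt_d9
  nlinarith

private lemma chernoff_count {T : Type*} [Fintype T] [Nonempty T]
    (m : ℕ) (ε : ℝ) (hε0 : 0 ≤ ε)
    (p : Fin m → T → Prop) [∀ j, DecidablePred (p j)]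
    (hbad : ∀ j, ((univ.filter (p j)).card : ℝ) ≤ ε * (Fintype.card T : ℝ)) :
    ((univ.filter fun σ : Fin m → T =>
        2 * ε * m < ((univ.filter fun j : Fin m => p j (σ j)).card : ℝ)).card : ℝ)
      ≤ (2 : ℝ) ^ (-(ε * m) / 2) * (Fintype.card (Fin m → T) : ℝ) := by
  classical
  set N : ℝ := (Fintype.card T : ℝ) with hN
  have hNpos : (0:ℝ) < N := by
    simp only [hN]; exact_mod_cast Fintype.card_pos
  -- weight functions
  set g : Fin m → T → ℝ := fun j t => if p j t then 2 else 1 with hg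
  have hg_nonneg : ∀ j t, 0 ≤ g j t := by
    intro j t; simp only [hg]; split <;> norm_num
  -- product of weights equals 2 ^ (number of bad sessions)
  have hprod : ∀ σ : Fin m → T, (∏ j, g j (σ j))
      = (2:ℝ) ^ ((univ.filter fun j : Fin m => p j (σ j)).card) := by
    intro σ
    simp only [hg]
    rw [Finset.prod_ite, Finset.prod_const, Finset.prod_const]
    simp
  -- per-session sum of weights
  have hτsum : ∀ j : Fin m, (∑ t, g j t) ≤ (1 + ε) * N := by
    intro j
    have hsplit := Finset.card_filter_add_card_filter_not
      (s := (univ : Finset T)) (p j)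
    simp only [hg, Finset.sum_ite, Finset.sum_const, nsmul_eq_mul, mul_one]
    have hb := hbad j
    have : ((univ.filter fun t => ¬ p j t).card : ℝ)
        = N - ((univ.filter (p j)).card : ℝ) := by
      have : ((univ.filter (p j)).card : ℝ)
          + ((univ.filter fun t => ¬ p j t).card : ℝ) = N := by
        simp only [hN]; exact_mod_cast hsplit
      linarith
    rw [this]
    ring_nf
    nlinarith
  -- sum over all σ of the product of weights
  have hswap : (∑ σ : Fin m → T, ∏ j, g j (σ j)) = ∏ j, ∑ t, g j t := by
    rw [Finset.prod_univ_sum]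
    simp
  have hsum_le : (∑ σ : Fin m → T, ∏ j, g j (σ j)) ≤ ((1 + ε) * N) ^ m := by
    rw [hswap]
    calc ∏ j, ∑ t, g j t ≤ ∏ _j : Fin m, (1 + ε) * N := by
          refine Finset.prod_le_prod (fun j _ => ?_) (fun j _ => hτsum j)
          exact Finset.sum_nonneg fun t _ => hg_nonneg j t
      _ = ((1 + ε) * N) ^ m := by simp
  -- Markov on the bad set
  set S := univ.filter fun σ : Fin m → T =>
      2 * ε * m < ((univ.filter fun j : Fin m => p j (σ j)).card : ℝ) with hS
  have hmarkov : (S.card : ℝ) * (2:ℝ) ^ (2 * ε * m)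
      ≤ ∑ σ : Fin m → T, ∏ j, g j (σ j) := by
    calc (S.card : ℝ) * (2:ℝ) ^ (2 * ε * m)
        = ∑ _σ ∈ S, (2:ℝ) ^ (2 * ε * m) := by
          rw [Finset.sum_const, nsmul_eq_mul]
      _ ≤ ∑ σ ∈ S, ∏ j, g j (σ j) := by
          refine Finset.sum_le_sum fun σ hσ => ?_
          rw [hprod σ]
          have hσ' := (Finset.mem_filter.mp hσ).2
          have : (2:ℝ) ^ (2 * ε * m)
              ≤ (2:ℝ) ^ (((univ.filter fun j : Fin m => p j (σ j)).card : ℕ) : ℝ) :=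
            Real.rpow_le_rpow_of_exponent_le (by norm_num) (le_of_lt hσ')
          rwa [Real.rpow_natCast] at this
      _ ≤ ∑ σ : Fin m → T, ∏ j, g j (σ j) := by
          refine Finset.sum_le_sum_of_subset_of_nonneg (Finset.subset_univ S)
            fun σ _ _ => Finset.prod_nonneg fun j _ => hg_nonneg j (σ j)
  -- bound ((1+ε) N)^m ≤ 2^(3εm/2) N^m
  have hpow : ((1 + ε) * N) ^ m ≤ (2:ℝ) ^ (3 * ε * m / 2) * N ^ m := by
    have h1 : ((1 + ε) * N) ^ m = (1 + ε) ^ m * N ^ m := mul_pow _ _ _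
    have h2 : (1 + ε) ^ m ≤ ((2:ℝ) ^ (3 * ε / 2)) ^ m :=
      pow_le_pow_left₀ (by linarith) (one_add_le_two_rpow ε hε0) m
    have h3 : ((2:ℝ) ^ (3 * ε / 2)) ^ m = (2:ℝ) ^ (3 * ε * m / 2) := by
      rw [← Real.rpow_natCast ((2:ℝ) ^ (3 * ε / 2)) m, ← Real.rpow_mul (by norm_num)]
      ring_nf
    rw [h1]
    have hNm : (0:ℝ) ≤ N ^ m := by positivity
    nlinarith [pow_nonneg (by linarith : (0:ℝ) ≤ 1 + ε) m]
  -- combine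
  have h2pos : (0:ℝ) < (2:ℝ) ^ (2 * ε * m) := Real.rpow_pos_of_pos (by norm_num) _
  have hcard : (Fintype.card (Fin m → T) : ℝ) = N ^ m := by
    rw [Fintype.card_fun, Fintype.card_fin]; push_cast; rfl
  rw [hcard]
  have key : (S.card : ℝ) * (2:ℝ) ^ (2 * ε * m)
      ≤ (2:ℝ) ^ (3 * ε * m / 2) * N ^ m := le_trans hmarkov (le_trans hsum_le hpow)
  have hdiv : (S.card : ℝ)
      ≤ (2:ℝ) ^ (3 * ε * m / 2) * N ^ m / (2:ℝ) ^ (2 * ε * m) :=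
    (le_div_iff₀ h2pos).mpr key
  calc (S.card : ℝ) ≤ (2:ℝ) ^ (3 * ε * m / 2) * N ^ m / (2:ℝ) ^ (2 * ε * m) := hdiv
    _ = (2:ℝ) ^ (-(ε * m) / 2) * N ^ m := by
        rw [mul_div_assoc]
        have hx : N ^ m / (2:ℝ) ^ (2 * ε * (m:ℝ)) = N ^ m * (2:ℝ) ^ (-(2 * ε * (m:ℝ))) := by
          rw [Real.rpow_neg (by norm_num), div_eq_mul_inv]
        rw [hx, mul_comm (N ^ m), ← mul_assoc, ← Real.rpow_add (by norm_num : (0:ℝ) < 2)]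
        ring_nf

/-- Derandomization/averaging step: with independent uniform permutations applied
coordinatewise, for each fixed message `w` whose permuted encoding tuples are
uniform on `Ωᵏ` and a bad set `A` of density at most `ε`, the fraction of
permutation tuples for which more than `2εm` sessions land in `A` is at most
`2^{−εm/2}`; hence there is a fixed choice of permutations such that, for a
uniformly random message, the fraction of bad messages is at most `2^{−εm/2}`. -/
theorem permutation_derandomization {Ω W : Type*} [Fintype Ω] [DecidableEq Ω]
    [Nonempty Ω] [Fintype W] [Nonempty W]
    (k m : ℕ) (hm : 0 < m) (hk : 0 < k)
    (A : Finset (Fin k → Ω)) (ε : ℝ) (hε0 : 0 ≤ ε) (hε1 : ε ≤ 1)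
    (hA : (A.card : ℝ) ≤ ε * (Fintype.card Ω : ℝ) ^ k)
    (E : Fin k → Fin m → W → Ω)
    (hunif : ∀ w : W, ∀ j : Fin m, ∀ a : Fin k → Ω,
      ((univ.filter fun τ : Fin k → Equiv.Perm Ω =>
          (fun i => τ i (E i j w)) = a).card : ℝ)
        = (Fintype.card (Fin k → Equiv.Perm Ω) : ℝ) / (Fintype.card Ω : ℝ) ^ k) :
    (∀ w : W,
      ((univ.filter fun σ : Fin m → Fin k → Equiv.Perm Ω =>
          2 * ε * m < ((univ.filter fun j : Fin m =>
            (fun i => σ j i (E i j w)) ∈ A).card : ℝ)).card : ℝ)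
        ≤ (2 : ℝ) ^ (-(ε * m) / 2)
            * (Fintype.card (Fin m → Fin k → Equiv.Perm Ω) : ℝ)) ∧
    (∃ σ : Fin m → Fin k → Equiv.Perm Ω,
      ((univ.filter fun w : W =>
          2 * ε * m < ((univ.filter fun j : Fin m =>
            (fun i => σ j i (E i j w)) ∈ A).card : ℝ)).card : ℝ)
        ≤ (2 : ℝ) ^ (-(ε * m) / 2) * (Fintype.card W : ℝ)) := by
  classical
  have hΩpow : (0:ℝ) < (Fintype.card Ω : ℝ) ^ k := by
    have := Fintype.card_pos (α := Ω); positivity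
  -- density of each bad event
  have hbad : ∀ w : W, ∀ j : Fin m,
      ((univ.filter fun τ : Fin k → Equiv.Perm Ω =>
        (fun i => τ i (E i j w)) ∈ A).card : ℝ)
      ≤ ε * (Fintype.card (Fin k → Equiv.Perm Ω) : ℝ) := by
    intro w j
    have hfiber : (univ.filter fun τ : Fin k → Equiv.Perm Ω =>
        (fun i => τ i (E i j w)) ∈ A).card
        = ∑ a ∈ A, (univ.filter fun τ : Fin k → Equiv.Perm Ω =>
            (fun i => τ i (E i j w)) = a).card := by
      rw [Finset.card_eq_sum_card_fiberwise
        (f := fun τ : Fin k → Equiv.Perm Ω => fun i => τ i (E i j w))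
        (s := univ.filter fun τ : Fin k → Equiv.Perm Ω => (fun i => τ i (E i j w)) ∈ A)
        (t := A) (fun τ hτ => (Finset.mem_filter.mp hτ).2)]
      refine Finset.sum_congr rfl fun a ha => ?_
      congr 1
      ext τ
      simp only [Finset.mem_filter, Finset.mem_univ, true_and]
      constructor
      · rintro ⟨-, h⟩; exact h
      · intro h; exact ⟨h ▸ ha, h⟩
    calc ((univ.filter fun τ : Fin k → Equiv.Perm Ω =>
            (fun i => τ i (E i j w)) ∈ A).card : ℝ)
        = ∑ a ∈ A, ((univ.filter fun τ : Fin k → Equiv.Perm Ω =>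
            (fun i => τ i (E i j w)) = a).card : ℝ) := by
          rw [hfiber]; push_cast; rfl
      _ = ∑ _a ∈ A, (Fintype.card (Fin k → Equiv.Perm Ω) : ℝ)
            / (Fintype.card Ω : ℝ) ^ k :=
          Finset.sum_congr rfl fun a _ => hunif w j a
      _ = (A.card : ℝ) * ((Fintype.card (Fin k → Equiv.Perm Ω) : ℝ)
            / (Fintype.card Ω : ℝ) ^ k) := by
          rw [Finset.sum_const, nsmul_eq_mul]
      _ ≤ ε * (Fintype.card Ω : ℝ) ^ k * ((Fintype.card (Fin k → Equiv.Perm Ω) : ℝ)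
            / (Fintype.card Ω : ℝ) ^ k) := by
          refine mul_le_mul_of_nonneg_right hA ?_
          positivity
      _ = ε * (Fintype.card (Fin k → Equiv.Perm Ω) : ℝ) := by
          field_simp
  -- first part via the Chernoff counting lemma
  have part1 : ∀ w : W,
      ((univ.filter fun σ : Fin m → Fin k → Equiv.Perm Ω =>
          2 * ε * m < ((univ.filter fun j : Fin m =>
            (fun i => σ j i (E i j w)) ∈ A).card : ℝ)).card : ℝ)
        ≤ (2 : ℝ) ^ (-(ε * m) / 2)
            * (Fintype.card (Fin m → Fin k → Equiv.Perm Ω) : ℝ) := by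
    intro w
    have h := chernoff_count (T := Fin k → Equiv.Perm Ω) m ε hε0
      (fun j τ => (fun i => τ i (E i j w)) ∈ A) (hbad w)
    exact h
  refine ⟨part1, ?_⟩
  -- averaging over messages
  set C : ℝ := (2 : ℝ) ^ (-(ε * m) / 2) with hC
  set P : (Fin m → Fin k → Equiv.Perm Ω) → W → Prop := fun σ w =>
    2 * ε * m < ((univ.filter fun j : Fin m =>
      (fun i => σ j i (E i j w)) ∈ A).card : ℝ) with hP
  have hswap : (∑ σ : Fin m → Fin k → Equiv.Perm Ω,
        ((univ.filter fun w : W => P σ w).card : ℝ))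
      = ∑ w : W, ((univ.filter fun σ : Fin m → Fin k → Equiv.Perm Ω =>
          P σ w).card : ℝ) := by
    simp only [Finset.card_filter]
    push_cast
    rw [Finset.sum_comm]
  have hsum : (∑ σ : Fin m → Fin k → Equiv.Perm Ω,
        ((univ.filter fun w : W => P σ w).card : ℝ))
      ≤ ∑ _σ : Fin m → Fin k → Equiv.Perm Ω, C * (Fintype.card W : ℝ) := by
    rw [hswap, Finset.sum_const]
    calc ∑ w : W, ((univ.filter fun σ : Fin m → Fin k → Equiv.Perm Ω =>
            P σ w).card : ℝ)
        ≤ ∑ _w : W, C * (Fintype.card (Fin m → Fin k → Equiv.Perm Ω) : ℝ) :=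
          Finset.sum_le_sum fun w _ => part1 w
      _ = (Fintype.card W : ℝ) * (C * (Fintype.card (Fin m → Fin k → Equiv.Perm Ω) : ℝ)) := by
          rw [Finset.sum_const, nsmul_eq_mul]; simp
      _ = (Fintype.card (Fin m → Fin k → Equiv.Perm Ω)) •
            (C * (Fintype.card W : ℝ)) := by
          rw [nsmul_eq_mul]; ring
  obtain ⟨σ, -, hσ⟩ := Finset.exists_le_of_sum_le
    (Finset.univ_nonempty (α := Fin m → Fin k → Equiv.Perm Ω))
    hsum
  exact ⟨σ, hσ⟩
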